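/- Let F_q be a finite field of odd order q and let j ∈ F_q. Then for every m ∈ F_q^2, Ŝ_j(m) = q^{-1} δ_0(m) + q^{-3} G^2 Σ_{r ∈ F_q^*} χ( j r + ||m||/(4r) ), where δ_0(m) = 1 if m = (0,0) and δ_0(m) = 0 otherwise, η is the quadratic character of F_q^*, and G = Σ_{s ∈ F_q^*} η(s) χ(s) is the Gauss sum. -/

import Mathlib

open Finset

/-- `‖x‖ = x₁² + x₂²` for `x ∈ F_q²`. -/
def nrm {F : Type} [Field F] (x : F × F) : F := x.1 ^ 2 + x.2 ^ 2

/-- Fourier transform `f̂(m) = q⁻² Σ_x f(x) χ(-x·m)`. -/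
noncomputable def ft {F : Type} [Field F] [Fintype F] (χ : AddChar F ℂ)
    (f : F × F → ℂ) (m : F × F) : ℂ :=
  (1 / (Fintype.card F : ℂ) ^ 2) *
    ∑ x : F × F, f x * χ (-(x.1 * m.1 + x.2 * m.2))

/-- Indicator function of a finite set of points. -/
def ind {F : Type} [Field F] [DecidableEq F] (A : Finset (F × F)) :
    F × F → ℂ :=
  fun x => if x ∈ A then 1 else 0

/-- The sphere `S_j = {x : ‖x‖ = j}` as a finset. -/
def sphere {F : Type} [Field F] [Fintype F] [DecidableEq F] (j : F) :
    Finset (F × F) :=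
  univ.filter (fun x => nrm x = j)

/-- The Gauss sum `G = Σ_{s ≠ 0} η(s) χ(s)` attached to the quadratic character
`η` and the additive character `χ`. -/
noncomputable def gaussSum' {F : Type} [Field F] [Fintype F] [DecidableEq F]
    (χ : AddChar F ℂ) : ℂ :=
  ∑ s ∈ univ.filter (fun s : F => s ≠ 0), ((quadraticChar F s : ℤ) : ℂ) * χ s

variable {F : Type} [Field F] [Fintype F] [DecidableEq F]

lemma eta_sq {a : F} (ha : a ≠ 0) : ((quadraticChar F a : ℤ) : ℂ) ^ 2 = 1 := by
  have := quadraticChar_sq_one ha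
  exact_mod_cast congrArg (fun z : ℤ => (z : ℂ)) this

lemma sum_char_sq (hF : ringChar F ≠ 2) (χ : AddChar F ℂ) (hp : χ.IsPrimitive)
    {a : F} (ha : a ≠ 0) :
    ∑ t : F, χ (a * t ^ 2) = ((quadraticChar F a : ℤ) : ℂ) * gaussSum' χ := by
  have fib : ∑ s : F, ∑ t ∈ univ.filter (fun t : F => t ^ 2 = s), χ (a * t ^ 2)
      = ∑ t : F, χ (a * t ^ 2) :=
    Finset.sum_fiberwise_of_maps_to (fun t _ => mem_univ _) _
  rw [← fib]
  have inner : ∀ s : F, ∑ t ∈ univ.filter (fun t : F => t ^ 2 = s), χ (a * t ^ 2)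
      = (((quadraticChar F s : ℤ) : ℂ) + 1) * χ (a * s) := by
    intro s
    rw [Finset.sum_congr rfl (fun t ht => by
        rw [(mem_filter.mp ht).2]), Finset.sum_const, nsmul_eq_mul]
    congr 1
    have hcard := quadraticChar_card_sqrts hF s
    have : ({x : F | x ^ 2 = s}.toFinset) = univ.filter (fun t : F => t ^ 2 = s) := by
      ext t; simp
    rw [this] at hcard
    have h' : ((#(univ.filter (fun t : F => t ^ 2 = s)) : ℕ) : ℂ)
        = ((quadraticChar F s : ℤ) : ℂ) + 1 := by exact_mod_cast hcard
    exact h'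
  simp_rw [inner, add_mul, one_mul, Finset.sum_add_distrib]
  have h0 : ∑ s : F, χ (a * s) = 0 := by
    have := AddChar.sum_mulShift a hp
    simp only [ha, if_false] at this
    simpa [mul_comm] using this
  rw [h0, add_zero]
  have hrestr : ∑ s : F, ((quadraticChar F s : ℤ) : ℂ) * χ (a * s)
      = ∑ s ∈ univ.filter (fun s : F => s ≠ 0), ((quadraticChar F s : ℤ) : ℂ) * χ (a * s) := by
    refine (Finset.sum_filter_of_ne fun s _ h => ?_).symm
    intro hs; apply h; simp [hs]
  rw [hrestr, gaussSum', Finset.mul_sum]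
  refine Finset.sum_nbij' (fun s => a * s) (fun s => a⁻¹ * s) ?_ ?_ ?_ ?_ ?_
  · intro s hs; simp only [mem_filter, mem_univ, true_and] at hs ⊢
    exact mul_ne_zero ha hs
  · intro s hs; simp only [mem_filter, mem_univ, true_and] at hs ⊢
    exact mul_ne_zero (inv_ne_zero ha) hs
  · intro s _; field_simp
  · intro s _; field_simp
  · intro s hs
    simp only [mem_filter, mem_univ, true_and] at hs
    have : ((quadraticChar F (a * s) : ℤ) : ℂ)
        = ((quadraticChar F a : ℤ) : ℂ) * ((quadraticChar F s : ℤ) : ℂ) := by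
      rw [map_mul]; push_cast; ring
    rw [this]
    have h2 := eta_sq (F := F) ha
    linear_combination (-(((quadraticChar F s : ℤ) : ℂ) * χ (a * s))) * h2

lemma sum_char_quad (hF : ringChar F ≠ 2) (χ : AddChar F ℂ) (hp : χ.IsPrimitive)
    {r : F} (hr : r ≠ 0) (u : F) :
    ∑ t : F, χ (r * t ^ 2 - t * u)
      = χ (-(u ^ 2) / (4 * r)) * (((quadraticChar F r : ℤ) : ℂ) * gaussSum' χ) := by
  have h2 : (2 : F) ≠ 0 := Ring.two_ne_zero hF
  have h4 : (4 : F) ≠ 0 := by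
    have : (4 : F) = 2 * 2 := by norm_num
    rw [this]; exact mul_ne_zero h2 h2
  have step : ∑ v : F, χ (r * v ^ 2 + -(u ^ 2) / (4 * r))
      = ∑ t : F, χ (r * t ^ 2 - t * u) := by
    refine Fintype.sum_bijective (fun v => v + u / (2 * r))
      (Equiv.addRight (u / (2 * r))).bijective _ _ (fun v => ?_)
    congr 1
    field_simp
    ring
  rw [← step]
  simp_rw [AddChar.map_add_eq_mul]
  rw [← Finset.sum_mul, sum_char_sq hF χ hp hr]
  ring

theorem sphere_fourier_formula
    {F : Type} [Field F] [Fintype F] [DecidableEq F]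
    (hq : Odd (Fintype.card F)) (χ : AddChar F ℂ) (hχ : χ ≠ 1)
    (j : F) (m : F × F) :
    ft χ (ind (sphere j)) m =
      (Fintype.card F : ℂ)⁻¹ * (if m = 0 then 1 else 0) +
        (Fintype.card F : ℂ)⁻¹ ^ 3 * gaussSum' χ ^ 2 *
          ∑ r ∈ univ.filter (fun r : F => r ≠ 0),
            χ (j * r + nrm m / (4 * r)) := by
  classical
  have hq0 : (Fintype.card F : ℂ) ≠ 0 := Nat.cast_ne_zero.mpr Fintype.card_ne_zero
  have hF2 : ringChar F ≠ 2 := by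
    intro h
    have h2 := FiniteField.even_card_iff_char_two.mp h
    rw [Nat.odd_iff] at hq
    omega
  have h2F : (2 : F) ≠ 0 := Ring.two_ne_zero hF2
  have h4F : (4 : F) ≠ 0 := by
    have : (4 : F) = 2 * 2 := by norm_num
    rw [this]; exact mul_ne_zero h2F h2F
  have hp : χ.IsPrimitive := AddChar.IsPrimitive.of_ne_one hχ
  have hind : ∀ x : F × F, ind (sphere j) x
      = (Fintype.card F : ℂ)⁻¹ * ∑ r : F, χ (r * (nrm x - j)) := by
    intro x
    rw [AddChar.sum_mulShift _ hp]
    simp only [ind, sphere, mem_filter, mem_univ, true_and, sub_eq_zero]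
    split_ifs with h
    · rw [inv_mul_cancel₀ hq0]
    · simp
  have inner0 : ∑ x : F × F, χ ((0 : F) * (nrm x - j) - (x.1 * m.1 + x.2 * m.2))
      = if m = 0 then (Fintype.card F : ℂ) ^ 2 else 0 := by
    rw [Fintype.sum_prod_type]
    have expand : ∀ x1 x2 : F, χ ((0 : F) * (nrm (x1, x2) - j) - (x1 * m.1 + x2 * m.2))
        = χ (x1 * (-m.1)) * χ (x2 * (-m.2)) := by
      intro x1 x2
      rw [← AddChar.map_add_eq_mul]
      congr 1; ring
    simp_rw [expand, ← Finset.mul_sum]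
    rw [← Finset.sum_mul, AddChar.sum_mulShift _ hp, AddChar.sum_mulShift _ hp]
    by_cases h1 : m.1 = 0 <;> by_cases h2 : m.2 = 0 <;>
      simp [h1, h2, Prod.ext_iff, sq]
  have innerr : ∀ r : F, r ≠ 0 →
      ∑ x : F × F, χ (r * (nrm x - j) - (x.1 * m.1 + x.2 * m.2))
        = χ (-(j * r + nrm m / (4 * r))) * gaussSum' χ ^ 2 := by
    intro r hr
    rw [Fintype.sum_prod_type]
    have expand : ∀ x1 x2 : F, χ (r * (nrm (x1, x2) - j) - (x1 * m.1 + x2 * m.2))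
        = χ (-(r * j)) * (χ (r * x1 ^ 2 - x1 * m.1) * χ (r * x2 ^ 2 - x2 * m.2)) := by
      intro x1 x2
      rw [← AddChar.map_add_eq_mul, ← AddChar.map_add_eq_mul]
      congr 1
      simp only [nrm]; ring
    simp_rw [expand, ← Finset.mul_sum]
    rw [← Finset.sum_mul]
    rw [sum_char_quad hF2 χ hp hr m.1, sum_char_quad hF2 χ hp hr m.2]
    have hmul : χ (-(r * j)) * (χ (-(m.1 ^ 2) / (4 * r)) * χ (-(m.2 ^ 2) / (4 * r)))
        = χ (-(j * r + nrm m / (4 * r))) := by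
      rw [← AddChar.map_add_eq_mul, ← AddChar.map_add_eq_mul]
      congr 1
      simp only [nrm]
      field_simp
      ring
    have he := eta_sq (F := F) hr
    calc χ (-(r * j)) * (χ (-(m.1 ^ 2) / (4 * r)) * (((quadraticChar F r : ℤ) : ℂ) * gaussSum' χ)
          * (χ (-(m.2 ^ 2) / (4 * r)) * (((quadraticChar F r : ℤ) : ℂ) * gaussSum' χ)))
        = (χ (-(r * j)) * (χ (-(m.1 ^ 2) / (4 * r)) * χ (-(m.2 ^ 2) / (4 * r))))
          * (((quadraticChar F r : ℤ) : ℂ) ^ 2 * gaussSum' χ ^ 2) := by ring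
      _ = χ (-(j * r + nrm m / (4 * r))) * gaussSum' χ ^ 2 := by
          rw [hmul, he, one_mul]
  have hneg : ∑ r ∈ univ.filter (fun r : F => ¬ r = 0), χ (-(j * r + nrm m / (4 * r)))
      = ∑ r ∈ univ.filter (fun r : F => r ≠ 0), χ (j * r + nrm m / (4 * r)) := by
    refine Finset.sum_nbij' (fun r => -r) (fun r => -r) ?_ ?_ ?_ ?_ ?_
    · intro r hr; simp only [mem_filter, mem_univ, true_and] at hr ⊢
      exact neg_ne_zero.mpr hr
    · intro r hr; simp only [mem_filter, mem_univ, true_and] at hr ⊢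
      exact neg_ne_zero.mpr hr
    · intro r _; simp
    · intro r _; simp
    · intro r hr
      simp only [mem_filter, mem_univ, true_and] at hr
      congr 1
      field_simp
      ring
  rw [ft]
  simp_rw [hind, mul_assoc, ← Finset.mul_sum, Finset.sum_mul,
    ← AddChar.map_add_eq_mul, ← sub_eq_add_neg]
  rw [Finset.sum_comm]
  rw [← Finset.sum_filter_add_sum_filter_not univ (fun r : F => r = 0)]
  have hzero : ∑ r ∈ univ.filter (fun r : F => r = 0),
      ∑ x : F × F, χ (r * (nrm x - j) - (x.1 * m.1 + x.2 * m.2))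
      = if m = 0 then (Fintype.card F : ℂ) ^ 2 else 0 := by
    rw [Finset.filter_eq']
    simp only [mem_univ, if_true, Finset.sum_singleton]
    exact inner0
  have hnz : ∑ r ∈ univ.filter (fun r : F => ¬ r = 0),
      ∑ x : F × F, χ (r * (nrm x - j) - (x.1 * m.1 + x.2 * m.2))
      = gaussSum' χ ^ 2 * ∑ r ∈ univ.filter (fun r : F => r ≠ 0),
          χ (j * r + nrm m / (4 * r)) := by
    rw [Finset.sum_congr rfl (fun r hr => innerr r (by
      simpa using (mem_filter.mp hr).2))]
    rw [← Finset.sum_mul, hneg, mul_comm]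
  rw [hzero, hnz]
  set S := ∑ r ∈ univ.filter (fun r : F => r ≠ 0), χ (j * r + nrm m / (4 * r)) with hS
  set G2 := gaussSum' χ with hG2
  by_cases hm : m = 0
  · simp only [hm, if_true]
    field_simp
  · simp only [hm, if_false, mul_zero, add_zero, zero_add]
    field_simp
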